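/- Let μ be a centred probability measure on ℝ with no atoms, and let F : ℝ × ℝ → ℝ be continuous with a continuous partial derivative F_s(w,s) = ∂F/∂s(w,s) such that for every w the function s ↦ F(w,s) is strictly increasing on all of ℝ, and for each s₀ > 0 the function w ↦ F_s(w, s₀)/(s₀ − w) is strictly increasing on (−∞, s₀). Assume w ↦ F(w, β_μ(w)) is μ-integrable. Then for every Rogers-admissible probability measure π with marginal μ such that F is π-integrable, one has ∫ F dπ ≤ ∫ F(w, β_μ(w)) dμ(w). -/

import Mathlib

open MeasureTheory Set

noncomputable section

/-- The set `M = {(x,y) : y ≥ 0 and y ≥ x}`. -/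
def MSet : Set (ℝ × ℝ) := {p : ℝ × ℝ | 0 ≤ p.2 ∧ p.1 ≤ p.2}

/-- A probability measure on `ℝ` is centred if the identity is integrable with mean `0`. -/
def Centred (μ : Measure ℝ) : Prop :=
  Integrable (fun x : ℝ => x) μ ∧ (∫ x, x ∂μ) = 0

/-- Strict supermodularity of a bivariate function. -/
def StrictlySupermodular (F : ℝ × ℝ → ℝ) : Prop :=
  ∀ w₁ w₂ s₁ s₂ : ℝ, w₁ < w₂ → s₁ < s₂ →
    F (w₁, s₂) + F (w₂, s₁) < F (w₁, s₁) + F (w₂, s₂)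

/-- `F` is serrated with ridge `a : ℝ → EReal`: for every `w`, `s ↦ F (w, s)` is
strictly increasing on `{s | s < a w}` and strictly decreasing on `{s | a w < s}`. -/
def SerratedWithRidge (F : ℝ × ℝ → ℝ) (a : ℝ → EReal) : Prop :=
  ∀ w : ℝ,
    StrictMonoOn (fun s : ℝ => F (w, s)) {s : ℝ | (s : EReal) < a w} ∧
    StrictAntiOn (fun s : ℝ => F (w, s)) {s : ℝ | a w < (s : EReal)}

/-- Rogers' conditions for `π` to be the joint law of the terminal value and the
running maximum of a UI martingale started at `0` with terminal law `μ`. -/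
def RogersAdmissible (μ : Measure ℝ) (π : Measure (ℝ × ℝ)) : Prop :=
  Integrable (fun p : ℝ × ℝ => p.1) π ∧
  (∫ p : ℝ × ℝ, p.1 ∂π) = 0 ∧
  π MSetᶜ = 0 ∧
  (∀ s : ℝ, 0 ≤ s →
    s * (π {p : ℝ × ℝ | s ≤ p.2}).toReal ≤ ∫ p in {p : ℝ × ℝ | s ≤ p.2}, p.1 ∂π) ∧
  Measure.map Prod.fst π = μ

/-- The barycenter function of `μ`. -/
def barycenter (μ : Measure ℝ) (w : ℝ) : ℝ :=
  if 0 < (μ (Ici w)).toReal then (∫ x in Ici w, x ∂μ) / (μ (Ici w)).toReal else w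

/-- `g(w) = min(β_μ(w), max(a(w), 0, w))`, the max computed in `EReal`. -/
def ridgeG (μ : Measure ℝ) (a : ℝ → EReal) (w : ℝ) : ℝ :=
  (min ((barycenter μ w : ℝ) : EReal) (max (a w) (max (0 : EReal) ((w : ℝ) : EReal)))).toReal

open Filter Topology
open scoped ENNReal NNReal

section Bary

variable {μ : Measure ℝ} [IsProbabilityMeasure μ]

lemma meas_toReal_pos_iff {s : Set ℝ} : 0 < (μ s).toReal ↔ 0 < μ s := by
  rw [ENNReal.toReal_pos_iff]
  exact ⟨fun h => h.1, fun h => ⟨h, measure_lt_top μ s⟩⟩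

lemma bary_of_pos {w : ℝ} (h : 0 < (μ (Ici w)).toReal) :
    barycenter μ w = (∫ x in Ici w, x ∂μ) / (μ (Ici w)).toReal := if_pos h

lemma bary_of_zero {w : ℝ} (h : ¬ 0 < (μ (Ici w)).toReal) : barycenter μ w = w := if_neg h

lemma setInt_const_Ici (w c : ℝ) : ∫ _ in Ici w, c ∂μ = (μ (Ici w)).toReal * c := by
  rw [setIntegral_const, smul_eq_mul, measureReal_def]

lemma bary_ge_self (hμ : Integrable (fun x : ℝ => x) μ) (w : ℝ) : w ≤ barycenter μ w := by
  by_cases h : 0 < (μ (Ici w)).toReal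
  · rw [bary_of_pos h, le_div_iff₀ h]
    calc w * (μ (Ici w)).toReal = ∫ _ in Ici w, w ∂μ := by rw [setInt_const_Ici]; ring
    _ ≤ ∫ x in Ici w, x ∂μ := by
        refine setIntegral_mono_on (integrableOn_const (measure_ne_top μ _))
          hμ.integrableOn measurableSet_Ici (fun x hx => hx)
  · rw [bary_of_zero h]

lemma bary_nonneg (hμ : Integrable (fun x : ℝ => x) μ) (hc : (∫ x, x ∂μ) = 0) (w : ℝ) :
    0 ≤ barycenter μ w := by
  rcases le_or_gt w 0 with hw | hw
  · by_cases h : 0 < (μ (Ici w)).toReal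
    · rw [bary_of_pos h]
      apply div_nonneg _ h.le
      have hsplit : (∫ x in Ici w, x ∂μ) + ∫ x in (Ici w)ᶜ, x ∂μ = ∫ x, x ∂μ :=
        integral_add_compl measurableSet_Ici hμ
      have hcompl : ∫ x in (Ici w)ᶜ, x ∂μ ≤ 0 := by
        rw [compl_Ici]
        calc ∫ x in Iio w, x ∂μ ≤ ∫ _ in Iio w, w ∂μ := by
              refine setIntegral_mono_on hμ.integrableOn
                (integrableOn_const (measure_ne_top μ _))
                measurableSet_Iio (fun x hx => le_of_lt hx)
        _ = (μ (Iio w)).toReal * w := by rw [setIntegral_const, smul_eq_mul, measureReal_def]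
        _ ≤ 0 := mul_nonpos_of_nonneg_of_nonpos ENNReal.toReal_nonneg hw
      linarith [hsplit.symm ▸ hc]
    · rw [bary_of_zero h]
      -- μ (Ici w) = 0 with w ≤ 0 : but μ is a probability measure...
      rcases eq_or_lt_of_le hw with h0 | h0
      · simp [h0]
      · exfalso
        have hz : μ (Ici w) = 0 := by
          by_contra hne
          exact h (meas_toReal_pos_iff.2 (pos_iff_ne_zero.2 hne))
        have h1 : μ (Iio w) = 1 := by
          have := measure_compl (μ := μ) (measurableSet_Ici (a := w)) (measure_ne_top μ _)
          rw [compl_Ici, hz, measure_univ] at this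
          simpa using this
        have hIci : ∫ x in Ici w, x ∂μ = 0 := by
          rw [Measure.restrict_eq_zero.mpr hz]; exact integral_zero_measure _
        have hsplit : (∫ x in Ici w, x ∂μ) + ∫ x in (Ici w)ᶜ, x ∂μ = ∫ x, x ∂μ :=
          integral_add_compl measurableSet_Ici hμ
        rw [compl_Ici, hIci, zero_add, hc] at hsplit
        have : (0:ℝ) ≤ w * (μ (Iio w)).toReal := by
          calc (0:ℝ) = ∫ x in Iio w, x ∂μ := hsplit.symm
          _ ≤ ∫ _ in Iio w, w ∂μ := by
              refine setIntegral_mono_on hμ.integrableOn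
                (integrableOn_const (measure_ne_top μ _))
                measurableSet_Iio (fun x hx => le_of_lt hx)
          _ = (μ (Iio w)).toReal * w := by rw [setIntegral_const, smul_eq_mul, measureReal_def]
          _ = w * (μ (Iio w)).toReal := mul_comm _ _
        rw [h1] at this
        simp at this
        linarith
  · exact le_trans hw.le (bary_ge_self hμ w)

end Bary

section Bary2
variable {μ : Measure ℝ} [IsProbabilityMeasure μ]

lemma meas_zero_of_not_pos {s : Set ℝ} (h : ¬ 0 < (μ s).toReal) : μ s = 0 := by
  by_contra hne
  exact h (meas_toReal_pos_iff.2 (pos_iff_ne_zero.2 hne))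

lemma bary_mono (hμ : Integrable (fun x : ℝ => x) μ) : Monotone (barycenter μ) := by
  intro w₁ w₂ h12
  rcases eq_or_lt_of_le h12 with rfl | hlt
  · exact le_rfl
  have hdisj : Disjoint (Ico w₁ w₂) (Ici w₂) := by
    rw [Set.disjoint_left]; rintro x ⟨_, hx2⟩ hx3; exact absurd hx3 (not_le.2 hx2)
  have hunion : Ico w₁ w₂ ∪ Ici w₂ = Ici w₁ := Ico_union_Ici_eq_Ici h12
  have hm : (μ (Ici w₁)).toReal = (μ (Ico w₁ w₂)).toReal + (μ (Ici w₂)).toReal := by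
    rw [← ENNReal.toReal_add (measure_ne_top μ _) (measure_ne_top μ _), ← measure_union hdisj
      measurableSet_Ici, hunion]
  have hI : (∫ x in Ici w₁, x ∂μ) = (∫ x in Ico w₁ w₂, x ∂μ) + ∫ x in Ici w₂, x ∂μ := by
    rw [← setIntegral_union hdisj measurableSet_Ici hμ.integrableOn hμ.integrableOn, hunion]
  have hIA : (∫ x in Ico w₁ w₂, x ∂μ) ≤ w₂ * (μ (Ico w₁ w₂)).toReal := by
    calc (∫ x in Ico w₁ w₂, x ∂μ) ≤ ∫ _ in Ico w₁ w₂, w₂ ∂μ :=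
        setIntegral_mono_on hμ.integrableOn
          (integrableOn_const (measure_ne_top μ _))
          measurableSet_Ico (fun x hx => le_of_lt hx.2)
    _ = w₂ * (μ (Ico w₁ w₂)).toReal := by rw [setIntegral_const, smul_eq_mul, measureReal_def, mul_comm]
  have hmA : 0 ≤ (μ (Ico w₁ w₂)).toReal := ENNReal.toReal_nonneg
  by_cases h2 : 0 < (μ (Ici w₂)).toReal
  · have h1 : 0 < (μ (Ici w₁)).toReal := by rw [hm]; positivity
    rw [bary_of_pos h1, bary_of_pos h2]
    set b2 := (∫ x in Ici w₂, x ∂μ) / (μ (Ici w₂)).toReal with hb2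
    have hw2b2 : w₂ ≤ b2 := by
      have := bary_ge_self hμ w₂; rwa [bary_of_pos h2] at this
    have hI2 : (∫ x in Ici w₂, x ∂μ) = b2 * (μ (Ici w₂)).toReal := by
      rw [hb2, div_mul_cancel₀]; exact ne_of_gt h2
    rw [div_le_iff₀ h1, hI, hI2, hm]
    nlinarith
  · have hz2 : μ (Ici w₂) = 0 := meas_zero_of_not_pos h2
    rw [bary_of_zero h2]
    by_cases h1 : 0 < (μ (Ici w₁)).toReal
    · rw [bary_of_pos h1, div_le_iff₀ h1]
      have hI2 : (∫ x in Ici w₂, x ∂μ) = 0 := by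
        rw [Measure.restrict_eq_zero.mpr hz2]; exact integral_zero_measure _
      have hm' : (μ (Ici w₁)).toReal = (μ (Ico w₁ w₂)).toReal := by
        rw [hm, hz2]; simp
      rw [hI, hI2, add_zero, hm']
      exact hIA
    · rw [bary_of_zero h1]; exact h12

lemma bary_measurable (hμ : Integrable (fun x : ℝ => x) μ) : Measurable (barycenter μ) :=
  (bary_mono hμ).measurable

end Bary2

section Bary3
variable {μ : Measure ℝ} [IsProbabilityMeasure μ]

lemma exists_bary_le (hμI : Integrable (fun x : ℝ => x) μ) (hc : (∫ x, x ∂μ) = 0)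
    {s : ℝ} (hs : 0 < s) :
    ∃ w : ℝ, barycenter μ w ≤ s := by
  have hsets : Monotone (fun n : ℕ => Ici (-(n : ℝ))) := fun a b hab =>
    Ici_subset_Ici.2 (neg_le_neg (Nat.cast_le.2 hab))
  have hUnion : ⋃ n : ℕ, Ici (-(n : ℝ)) = univ := by
    ext x; simp only [mem_iUnion, mem_Ici, mem_univ, iff_true]
    obtain ⟨n, hn⟩ := exists_nat_ge (-x); exact ⟨n, by linarith⟩
  have hti : Tendsto (fun n : ℕ => ∫ x in Ici (-(n : ℝ)), x ∂μ) atTop (𝓝 (∫ x, x ∂μ)) := by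
    have h := tendsto_setIntegral_of_monotone (fun n => measurableSet_Ici) hsets
      (by rw [hUnion]; exact hμI.integrableOn)
    rwa [hUnion, Measure.restrict_univ] at h
  have htm : Tendsto (fun n : ℕ => (μ (Ici (-(n : ℝ)))).toReal) atTop (𝓝 1) := by
    have h := tendsto_measure_iUnion_atTop (μ := μ) hsets
    rw [hUnion, measure_univ] at h
    have := (ENNReal.tendsto_toReal (by norm_num : (1 : ℝ≥0∞) ≠ ⊤)).comp h
    simpa [Function.comp_def] using this
  have h1 : ∀ᶠ n : ℕ in atTop, |∫ x in Ici (-(n : ℝ)), x ∂μ| < s / 2 := by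
    have := hti.abs
    rw [hc, abs_zero] at this
    exact this.eventually_lt_const (by linarith)
  have h2 : ∀ᶠ n : ℕ in atTop, (1 : ℝ) / 2 < (μ (Ici (-(n : ℝ)))).toReal :=
    htm.eventually_const_lt (by norm_num)
  obtain ⟨n, hn1, hn2⟩ := (h1.and h2).exists
  refine ⟨-(n : ℝ), ?_⟩
  have hp : 0 < (μ (Ici (-(n : ℝ)))).toReal := by linarith
  rw [bary_of_pos hp]
  calc (∫ x in Ici (-(n : ℝ)), x ∂μ) / (μ (Ici (-(n : ℝ)))).toReal
      ≤ |∫ x in Ici (-(n : ℝ)), x ∂μ| / (μ (Ici (-(n : ℝ)))).toReal := by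
        gcongr; exact le_abs_self _
    _ ≤ (s / 2) / (1 / 2) := by
        apply div_le_div₀ (by linarith) hn1.le (by norm_num) hn2.le
    _ = s := by ring

end Bary3

section Bary4
variable {μ : Measure ℝ} [IsProbabilityMeasure μ] [NullSingletonClass μ]

lemma key_mu (hμI : Integrable (fun x : ℝ => x) μ) (hc : (∫ x, x ∂μ) = 0)
    {s : ℝ} (hs : 0 < s) :
    ∫ x in {x | s < barycenter μ x}, (x - s) ∂μ = 0 := by
  set g := barycenter μ with hg
  set T : Set ℝ := {x | s < g x} with hT
  have hmono : Monotone g := bary_mono hμI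
  have hTup : ∀ ⦃x y : ℝ⦄, x ∈ T → x ≤ y → y ∈ T := fun x y hx hxy =>
    lt_of_lt_of_le hx (hmono hxy)
  have hTne : T.Nonempty := ⟨s + 1, by
    have := bary_ge_self hμI (s + 1)
    simp only [hT, mem_setOf_eq]; rw [hg]; linarith⟩
  obtain ⟨w₀, hw₀⟩ := exists_bary_le hμI hc hs
  have hTbdd : BddBelow T := ⟨w₀, fun x hx => by
    by_contra hlt; push_neg at hlt
    have : g x ≤ s := le_trans (hmono hlt.le) hw₀
    exact absurd hx (by simp only [hT, mem_setOf_eq]; linarith)⟩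
  set α := sInf T with hα
  have hIoiT : Ioi α ⊆ T := fun x hx => by
    obtain ⟨t, htT, htx⟩ := exists_lt_of_csInf_lt hTne hx
    exact hTup htT htx.le
  have hTIci : T ⊆ Ici α := fun x hx => csInf_le hTbdd hx
  have hint : Integrable (fun x : ℝ => x - s) μ := hμI.sub (integrable_const s)
  have hae : T =ᵐ[μ] Ioi α := by
    rw [ae_eq_set]
    constructor
    · refine measure_mono_null (fun x hx => ?_) (measure_singleton α)
      rcases hx with ⟨hx1, hx2⟩
      simp only [mem_Ioi, not_lt] at hx2
      exact mem_singleton_iff.2 (le_antisymm hx2 (hTIci hx1))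
    · rw [diff_eq_empty.mpr hIoiT]; exact measure_empty
  have hup : ∀ w, α < w → 0 ≤ ∫ x in Ici w, (x - s) ∂μ := by
    intro w hw
    have hwT : s < g w := hIoiT hw
    by_cases hp : 0 < (μ (Ici w)).toReal
    · rw [hg, bary_of_pos hp, lt_div_iff₀ hp] at hwT
      rw [integral_sub hμI.integrableOn (integrableOn_const (measure_ne_top μ _)),
        setIntegral_const, smul_eq_mul, measureReal_def]
      nlinarith
    · rw [Measure.restrict_eq_zero.mpr (meas_zero_of_not_pos hp)]; simp
  have hdown : ∀ w, w < α → ∫ x in Ici w, (x - s) ∂μ ≤ 0 := by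
    intro w hw
    have hwT : w ∉ T := fun hwT => absurd (hTIci hwT) (by simp [not_le.2 hw])
    have hgw : g w ≤ s := by
      by_contra hgt; push_neg at hgt; exact hwT hgt
    by_cases hp : 0 < (μ (Ici w)).toReal
    · rw [hg, bary_of_pos hp, div_le_iff₀ hp] at hgw
      rw [integral_sub hμI.integrableOn (integrableOn_const (measure_ne_top μ _)),
        setIntegral_const, smul_eq_mul, measureReal_def]
      nlinarith
    · rw [Measure.restrict_eq_zero.mpr (meas_zero_of_not_pos hp)]; simp
  have hq1 : 0 ≤ ∫ x in Ioi α, (x - s) ∂μ := by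
    have hsets : Monotone (fun n : ℕ => Ici (α + 1 / ((n : ℝ) + 1))) := by
      intro a b hab
      apply Ici_subset_Ici.2
      have : 1 / ((b : ℝ) + 1) ≤ 1 / ((a : ℝ) + 1) := by
        apply div_le_div_of_nonneg_left one_pos.le (by positivity)
        have hcast : (a : ℝ) ≤ b := Nat.cast_le.mpr hab
        linarith
      linarith
    have hU : ⋃ n : ℕ, Ici (α + 1 / ((n : ℝ) + 1)) = Ioi α := by
      ext x
      simp only [mem_iUnion, mem_Ici, mem_Ioi]
      constructor
      · rintro ⟨n, hn⟩
        have : 0 < 1 / ((n : ℝ) + 1) := by positivity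
        linarith
      · intro hx
        obtain ⟨n, hn⟩ := exists_nat_one_div_lt (by linarith : 0 < x - α)
        exact ⟨n, by linarith⟩
    have ht := tendsto_setIntegral_of_monotone (fun n => measurableSet_Ici) hsets
      (by rw [hU]; exact hint.integrableOn)
    rw [hU] at ht
    refine ge_of_tendsto ht (Eventually.of_forall fun n => hup _ ?_)
    have : 0 < 1 / ((n : ℝ) + 1) := by positivity
    linarith
  have hq2 : ∫ x in Ici α, (x - s) ∂μ ≤ 0 := by
    have hsets : Antitone (fun n : ℕ => Ici (α - 1 / ((n : ℝ) + 1))) := by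
      intro a b hab
      apply Ici_subset_Ici.2
      have : 1 / ((b : ℝ) + 1) ≤ 1 / ((a : ℝ) + 1) := by
        apply div_le_div_of_nonneg_left one_pos.le (by positivity)
        have hcast : (a : ℝ) ≤ b := Nat.cast_le.mpr hab
        linarith
      linarith
    have hU : ⋂ n : ℕ, Ici (α - 1 / ((n : ℝ) + 1)) = Ici α := by
      ext x
      simp only [mem_iInter, mem_Ici]
      constructor
      · intro hx
        by_contra hlt; push_neg at hlt
        obtain ⟨n, hn⟩ := exists_nat_one_div_lt (by linarith : 0 < α - x)
        have := hx n; linarith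
      · intro hx n
        have : 0 < 1 / ((n : ℝ) + 1) := by positivity
        linarith
    have ht := tendsto_setIntegral_of_antitone (fun n => measurableSet_Ici) hsets
      ⟨0, hint.integrableOn⟩
    rw [hU] at ht
    refine le_of_tendsto ht (Eventually.of_forall fun n => hdown _ ?_)
    have : 0 < 1 / ((n : ℝ) + 1) := by positivity
    linarith
  have hIciIoi : ∫ x in Ici α, (x - s) ∂μ = ∫ x in Ioi α, (x - s) ∂μ :=
    setIntegral_congr_set (Ioi_ae_eq_Ici (a := α)).symm
  rw [setIntegral_congr_set hae]
  rw [hIciIoi] at hq2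
  linarith

end Bary4

section KeyPi
variable {π : Measure (ℝ × ℝ)} [IsProbabilityMeasure π]

lemma key_pi (hx : Integrable (fun p : ℝ × ℝ => p.1) π)
    (hiv : ∀ s : ℝ, 0 ≤ s →
      s * (π {p : ℝ × ℝ | s ≤ p.2}).toReal ≤ ∫ p in {p : ℝ × ℝ | s ≤ p.2}, p.1 ∂π)
    {s : ℝ} (hs : 0 ≤ s) :
    s * (π {p : ℝ × ℝ | s < p.2}).toReal ≤ ∫ p in {p : ℝ × ℝ | s < p.2}, p.1 ∂π := by
  set A : ℕ → Set (ℝ × ℝ) := fun n => {p | s + 1 / ((n : ℝ) + 1) ≤ p.2} with hA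
  have hAm : ∀ n, MeasurableSet (A n) := fun n => measurable_snd measurableSet_Ici
  have hAmono : Monotone A := by
    intro a b hab p hp
    simp only [hA, mem_setOf_eq] at *
    have : 1 / ((b : ℝ) + 1) ≤ 1 / ((a : ℝ) + 1) := by
      apply div_le_div_of_nonneg_left one_pos.le (by positivity)
      have hcast : (a : ℝ) ≤ b := Nat.cast_le.mpr hab
      linarith
    linarith
  have hAU : ⋃ n, A n = {p : ℝ × ℝ | s < p.2} := by
    ext p
    simp only [hA, mem_iUnion, mem_setOf_eq]
    constructor
    · rintro ⟨n, hn⟩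
      have : 0 < 1 / ((n : ℝ) + 1) := by positivity
      linarith
    · intro hp
      obtain ⟨n, hn⟩ := exists_nat_one_div_lt (by linarith : 0 < p.2 - s)
      exact ⟨n, by linarith⟩
  have hmeas : MeasurableSet {p : ℝ × ℝ | s < p.2} := measurable_snd measurableSet_Ioi
  have ht1 : Tendsto (fun n => s * (π (A n)).toReal) atTop
      (𝓝 (s * (π {p : ℝ × ℝ | s < p.2}).toReal)) := by
    have h := tendsto_measure_iUnion_atTop (μ := π) hAmono
    rw [hAU] at h
    exact Tendsto.const_mul s ((ENNReal.tendsto_toReal (measure_ne_top π _)).comp h)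
  have ht2 : Tendsto (fun n => ∫ p in A n, p.1 ∂π) atTop
      (𝓝 (∫ p in {p : ℝ × ℝ | s < p.2}, p.1 ∂π)) := by
    have h := tendsto_setIntegral_of_monotone hAm hAmono (by rw [hAU]; exact hx.integrableOn)
    rwa [hAU] at h
  refine le_of_tendsto_of_tendsto' ht1 ht2 fun n => ?_
  have hsn : (0 : ℝ) ≤ s + 1 / ((n : ℝ) + 1) := by positivity
  calc s * (π (A n)).toReal ≤ (s + 1 / ((n : ℝ) + 1)) * (π (A n)).toReal := by
        apply mul_le_mul_of_nonneg_right _ ENNReal.toReal_nonneg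
        have : 0 < 1 / ((n : ℝ) + 1) := by positivity
        linarith
    _ ≤ ∫ p in A n, p.1 ∂π := hiv _ hsn

end KeyPi

lemma deriv_nonneg_of_strictMono {f : ℝ → ℝ} (hf : StrictMono f) {d s : ℝ}
    (hd : HasDerivAt f d s) : 0 ≤ d := by
  have h := hasDerivAt_iff_tendsto_slope.1 hd
  have h2 : Tendsto (slope f s) (𝓝[>] s) (𝓝 d) :=
    h.mono_left (nhdsWithin_mono s (fun x hx => ne_of_gt hx))
  refine ge_of_tendsto h2 ?_
  filter_upwards [self_mem_nhdsWithin] with t ht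
  have h3 : f s < f t := hf ht
  rw [slope_def_field]
  apply div_nonneg (by linarith)
  have : s < t := ht
  linarith

section Bary5
variable {μ : Measure ℝ} [IsProbabilityMeasure μ] [NullSingletonClass μ]

lemma bary_gt_self_of_pos (hμI : Integrable (fun x : ℝ => x) μ) {s : ℝ}
    (hp : 0 < (μ (Ici s)).toReal) : s < barycenter μ s := by
  have hIoi : μ (Ioi s) = μ (Ici s) := measure_congr (Ioi_ae_eq_Ici)
  have hU : ⋃ n : ℕ, Ici (s + 1 / ((n : ℝ) + 1)) = Ioi s := by
    ext x
    simp only [mem_iUnion, mem_Ici, mem_Ioi]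
    constructor
    · rintro ⟨n, hn⟩
      have : 0 < 1 / ((n : ℝ) + 1) := by positivity
      linarith
    · intro hx
      obtain ⟨n, hn⟩ := exists_nat_one_div_lt (by linarith : 0 < x - s)
      exact ⟨n, by linarith⟩
  have hex : ∃ n : ℕ, μ (Ici (s + 1 / ((n : ℝ) + 1))) ≠ 0 := by
    by_contra hall
    push_neg at hall
    have : μ (Ioi s) = 0 := by
      rw [← hU]; exact measure_iUnion_null fun n => hall n
    rw [hIoi] at this
    rw [this] at hp; simp at hp
  obtain ⟨n, hn⟩ := hex
  set ε := 1 / ((n : ℝ) + 1) with hε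
  have hεpos : 0 < ε := by positivity
  have hmε : 0 < (μ (Ici (s + ε))).toReal := meas_toReal_pos_iff.2 (pos_iff_ne_zero.2 hn)
  have hkey : 0 < ∫ x in Ici s, (x - s) ∂μ := by
    have h1 : ε * (μ (Ici (s + ε))).toReal ≤ ∫ x in Ici (s + ε), (x - s) ∂μ := by
      calc ε * (μ (Ici (s + ε))).toReal = ∫ _ in Ici (s + ε), ε ∂μ := by
            rw [setIntegral_const, smul_eq_mul, measureReal_def]; ring
        _ ≤ ∫ x in Ici (s + ε), (x - s) ∂μ :=
            setIntegral_mono_on (integrableOn_const (measure_ne_top μ _))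
              ((hμI.sub (integrable_const s)).integrableOn) measurableSet_Ici
              (fun x hx => by simp only [mem_Ici] at hx; linarith)
    have h2 : (∫ x in Ici (s + ε), (x - s) ∂μ) ≤ ∫ x in Ici s, (x - s) ∂μ := by
      apply setIntegral_mono_set ((hμI.sub (integrable_const s)).integrableOn)
      · filter_upwards [ae_restrict_mem measurableSet_Ici] with x hx
        simp only [mem_Ici] at hx; simp; linarith
      · exact HasSubset.Subset.eventuallyLE (Ici_subset_Ici.2 (by linarith))
    nlinarith
  rw [integral_sub hμI.integrableOn (integrableOn_const (measure_ne_top μ _)),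
    setIntegral_const, smul_eq_mul, measureReal_def] at hkey
  rw [bary_of_pos hp, lt_div_iff₀ hp]
  nlinarith

lemma exists_lt_bary_gt (hμI : Integrable (fun x : ℝ => x) μ) {s : ℝ}
    (hp : 0 < (μ (Ici s)).toReal) : ∃ x, x < s ∧ s < barycenter μ x := by
  have hbs : s < barycenter μ s := bary_gt_self_of_pos hμI hp
  set xn : ℕ → ℝ := fun n => s - 1 / ((n : ℝ) + 1) with hxn
  have hanti : Antitone (fun n : ℕ => Ici (xn n)) := by
    intro a b hab
    apply Ici_subset_Ici.2
    have : 1 / ((b : ℝ) + 1) ≤ 1 / ((a : ℝ) + 1) := by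
      apply div_le_div_of_nonneg_left one_pos.le (by positivity)
      have hcast : (a : ℝ) ≤ b := Nat.cast_le.mpr hab
      linarith
    simp only [hxn]; linarith
  have hInter : ⋂ n : ℕ, Ici (xn n) = Ici s := by
    ext x
    simp only [mem_iInter, mem_Ici, hxn]
    constructor
    · intro hx
      by_contra hlt; push_neg at hlt
      obtain ⟨n, hn⟩ := exists_nat_one_div_lt (by linarith : 0 < s - x)
      have := hx n; linarith
    · intro hx n
      have : 0 < 1 / ((n : ℝ) + 1) := by positivity
      linarith
  have htI : Tendsto (fun n => ∫ x in Ici (xn n), x ∂μ) atTop (𝓝 (∫ x in Ici s, x ∂μ)) := by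
    have h := tendsto_setIntegral_of_antitone (fun n => measurableSet_Ici) hanti
      ⟨0, hμI.integrableOn⟩
    rwa [hInter] at h
  have htm : Tendsto (fun n => (μ (Ici (xn n))).toReal) atTop (𝓝 ((μ (Ici s)).toReal)) := by
    have h := tendsto_measure_iInter_atTop (μ := μ)
      (fun n => measurableSet_Ici.nullMeasurableSet) hanti ⟨0, measure_ne_top μ _⟩
    rw [hInter] at h
    exact (ENNReal.tendsto_toReal (measure_ne_top μ _)).comp h
  have hmn : ∀ n, 0 < (μ (Ici (xn n))).toReal := by
    intro n
    have hsub : Ici s ⊆ Ici (xn n) := Ici_subset_Ici.2 (by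
      have : 0 < 1 / ((n : ℝ) + 1) := by positivity
      simp only [hxn]; linarith)
    exact lt_of_lt_of_le hp (ENNReal.toReal_le_toReal (measure_ne_top μ _)
      (measure_ne_top μ _) |>.2 (measure_mono hsub))
  have htb : Tendsto (fun n => barycenter μ (xn n)) atTop (𝓝 (barycenter μ s)) := by
    have h := htI.div htm (ne_of_gt hp)
    rw [← bary_of_pos hp] at h
    refine h.congr fun n => ?_
    simp only [Pi.div_apply]
    rw [bary_of_pos (hmn n)]
  have hev : ∀ᶠ n : ℕ in atTop, s < barycenter μ (xn n) := htb.eventually_const_lt hbs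
  obtain ⟨n, hn⟩ := hev.exists
  refine ⟨xn n, ?_, hn⟩
  have : 0 < 1 / ((n : ℝ) + 1) := by positivity
  simp only [hxn]; linarith

end Bary5

section PerS

variable {μ : Measure ℝ} [IsProbabilityMeasure μ] [NullSingletonClass μ]
  {π : Measure (ℝ × ℝ)} [IsProbabilityMeasure π]

lemma per_s (hμI : Integrable (fun x : ℝ => x) μ) (hc : (∫ x, x ∂μ) = 0)
    (Fs : ℝ × ℝ → ℝ)
    (hFs_meas : Continuous Fs)
    (hFs_nonneg : ∀ p, 0 ≤ Fs p)
    (hratio : ∀ s₀ : ℝ, 0 < s₀ →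
      StrictMonoOn (fun w : ℝ => Fs (w, s₀) / (s₀ - w)) (Iio s₀))
    (hx : Integrable (fun p : ℝ × ℝ => p.1) π)
    (hiv : ∀ s : ℝ, 0 ≤ s →
      s * (π {p : ℝ × ℝ | s ≤ p.2}).toReal ≤ ∫ p in {p : ℝ × ℝ | s ≤ p.2}, p.1 ∂π)
    (hM : π MSetᶜ = 0)
    (hmap : Measure.map Prod.fst π = μ)
    {s : ℝ} (hs : 0 < s)
    (hatomy : π {p : ℝ × ℝ | p.2 = s} = 0)
    (hatomg : μ {x : ℝ | barycenter μ x = s} = 0)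
    (hφint : Integrable
      (fun p : ℝ × ℝ => (Ioo (barycenter μ p.1) p.2).indicator (fun t => Fs (p.1, t)) s) π)
    (hψint : Integrable
      (fun p : ℝ × ℝ => (Ioo p.2 (barycenter μ p.1)).indicator (fun t => Fs (p.1, t)) s) π) :
    (∫ p, (Ioo (barycenter μ p.1) p.2).indicator (fun t => Fs (p.1, t)) s ∂π) ≤
      ∫ p, (Ioo p.2 (barycenter μ p.1)).indicator (fun t => Fs (p.1, t)) s ∂π := by
  set g := barycenter μ with hg
  have hgmeas : Measurable g := bary_measurable hμI
  set T : Set ℝ := {x | s < g x} with hT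
  have hmono : Monotone g := bary_mono hμI
  have hTup : ∀ ⦃x y : ℝ⦄, x ∈ T → x ≤ y → y ∈ T := fun x y hx' hxy =>
    lt_of_lt_of_le hx' (hmono hxy)
  have hTne : T.Nonempty := ⟨s + 1, by
    have := bary_ge_self hμI (s + 1)
    simp only [hT, mem_setOf_eq]; rw [hg]; linarith⟩
  obtain ⟨w₀, hw₀⟩ := exists_bary_le hμI hc hs
  have hTbdd : BddBelow T := ⟨w₀, fun x hx' => by
    by_contra hlt; push_neg at hlt
    have : g x ≤ s := le_trans (hmono hlt.le) hw₀
    exact absurd hx' (by simp only [hT, mem_setOf_eq]; linarith)⟩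
  set α := sInf T with hα
  have hαle : α ≤ s := by
    apply le_of_forall_pos_le_add
    intro ε hε
    refine csInf_le hTbdd ?_
    have h1 := bary_ge_self hμI (s + ε)
    simp only [hT, mem_setOf_eq]; rw [hg]; linarith
  -- a.e. facts on π
  have hMae : ∀ᵐ p ∂π, p ∈ MSet := by
    rw [ae_iff]
    exact hM
  have hyae : ∀ᵐ p ∂π, p.2 ≠ s := by
    rw [ae_iff]
    convert hatomy using 2
    ext p; simp
  have hgae : ∀ᵐ p ∂π, g p.1 ≠ s := by
    rw [ae_iff]
    have heq : {p : ℝ × ℝ | ¬ g p.1 ≠ s} = Prod.fst ⁻¹' (g ⁻¹' {s}) := by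
      ext p; simp
    rw [heq, ← Measure.map_apply measurable_fst (hgmeas (measurableSet_singleton s)), hmap]
    exact hatomg
  rcases eq_or_lt_of_le hαle with hcase | hcase
  · -- degenerate case α = s : show LHS integral is 0 and RHS ≥ 0
    have hμIci : μ (Ici s) = 0 := by
      by_contra hne
      have hp : 0 < (μ (Ici s)).toReal := meas_toReal_pos_iff.2 (pos_iff_ne_zero.2 hne)
      obtain ⟨x, hx1, hx2⟩ := exists_lt_bary_gt hμI hp
      have : α ≤ x := csInf_le hTbdd (by simp only [hT, mem_setOf_eq]; exact hx2)
      rw [← hcase] at hx1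
      linarith
    have hπx : π {p : ℝ × ℝ | s ≤ p.1} = 0 := by
      have : {p : ℝ × ℝ | s ≤ p.1} = Prod.fst ⁻¹' Ici s := rfl
      rw [this, ← Measure.map_apply measurable_fst measurableSet_Ici, hmap]
      exact hμIci
    have hπy : π {p : ℝ × ℝ | s < p.2} = 0 := by
      by_contra hne
      have hA : MeasurableSet {p : ℝ × ℝ | s < p.2} := measurable_snd measurableSet_Ioi
      have hlt : ∀ᵐ p ∂π, p.1 < s := by
        rw [ae_iff]
        refine measure_mono_null (fun p hp => ?_) hπx
        simpa using hp
      have h1 := key_pi hx hiv hs.le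
      have h2 : 0 < ∫ p in {p : ℝ × ℝ | s < p.2}, (s - p.1) ∂π := by
        rw [setIntegral_pos_iff_support_of_nonneg_ae]
        · -- 0 < π (support ∩ A)
          have hsupp : {p : ℝ × ℝ | s < p.2} \ Function.support (fun p : ℝ × ℝ => s - p.1) ⊆
              {p : ℝ × ℝ | s ≤ p.1} := by
            intro p hp
            rcases hp with ⟨hp1, hp2⟩
            simp only [Function.mem_support, ne_eq, not_not] at hp2
            simp only [mem_setOf_eq]; linarith [sub_eq_zero.1 hp2]
          by_contra hz
          push_neg at hz
          have hz0 : π (Function.support (fun p : ℝ × ℝ => s - p.1) ∩ {p : ℝ × ℝ | s < p.2}) = 0 :=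
            le_antisymm hz zero_le
          have : π {p : ℝ × ℝ | s < p.2} = 0 := by
            have hsub : {p : ℝ × ℝ | s < p.2} ⊆
                (Function.support (fun p : ℝ × ℝ => s - p.1) ∩ {p : ℝ × ℝ | s < p.2}) ∪
                ({p : ℝ × ℝ | s < p.2} \ Function.support (fun p : ℝ × ℝ => s - p.1)) := by
              intro p hp
              by_cases hps : p ∈ Function.support (fun p : ℝ × ℝ => s - p.1)
              · exact Or.inl ⟨hps, hp⟩
              · exact Or.inr ⟨hp, hps⟩
            refine measure_mono_null hsub ?_
            refine measure_union_null hz0 (measure_mono_null hsupp hπx)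
          exact hne this
        · filter_upwards [ae_restrict_of_ae hlt] with p hp
          simp; linarith
        · exact (integrable_const s |>.sub hx).integrableOn
      rw [integral_sub (integrable_const s).integrableOn hx.integrableOn,
        setIntegral_const, smul_eq_mul, measureReal_def] at h2
      linarith
    -- LHS = 0
    have hLHS : (∫ p, (Ioo (g p.1) p.2).indicator (fun t => Fs (p.1, t)) s ∂π) = 0 := by
      have h0 : ∀ᵐ p ∂π, ¬ (s < p.2) := by
        rw [ae_iff]
        refine measure_mono_null (fun p hp => ?_) hπy
        simpa using hp
      refine integral_eq_zero_of_ae ?_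
      filter_upwards [h0] with p hp
      rw [indicator_of_notMem (fun hmem => hp hmem.2)]
      simp
    rw [hLHS]
    exact integral_nonneg (fun p => indicator_nonneg (fun t _ => hFs_nonneg _) _)
  · -- main case α < s
    classical
    set lam := Fs (α, s) / (s - α) with hlam
    have hlam_nonneg : 0 ≤ lam := div_nonneg (hFs_nonneg _) (by linarith)
    -- pointwise bound
    have hpoint : ∀ p : ℝ × ℝ, p ∈ MSet → p.2 ≠ s → g p.1 ≠ s →
        (Ioo (g p.1) p.2).indicator (fun t => Fs (p.1, t)) s -
          (Ioo p.2 (g p.1)).indicator (fun t => Fs (p.1, t)) s ≤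
        lam * ((if s < p.2 then s - p.1 else 0) - (if s < g p.1 then s - p.1 else 0)) := by
      rintro ⟨x, y⟩ ⟨hy0, hxy⟩ hys hgs
      simp only at hy0 hxy hys hgs ⊢
      have hxg : x ≤ g x := bary_ge_self hμI x
      rcases lt_or_gt_of_ne hys with hy | hy <;> rcases lt_or_gt_of_ne hgs with hgx | hgx
      · -- y < s, g x < s : both indicators 0, both ifs 0
        rw [indicator_of_notMem (by simp only [mem_Ioo]; intro h; linarith [h.2]),
          indicator_of_notMem (by simp only [mem_Ioo]; intro h; linarith [h.1])]
        rw [if_neg (by linarith), if_neg (by linarith)]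
        simp
      · -- y < s < g x : ψ-case
        rw [indicator_of_notMem (by simp only [mem_Ioo]; intro h; linarith [h.2]),
          indicator_of_mem (by simp only [mem_Ioo]; exact ⟨hy, hgx⟩)]
        rw [if_neg (by linarith), if_pos hgx]
        -- need : -Fs (x, s) ≤ lam * (0 - (s - x)) i.e. lam * (s - x) ≤ Fs (x,s)
        have hxs : x < s := lt_of_le_of_lt hxy hy
        have hαx : α ≤ x := csInf_le hTbdd (by simp only [hT, mem_setOf_eq]; exact hgx)
        have hmon := (hratio s hs).monotoneOn (mem_Iio.2 hcase) (mem_Iio.2 hxs) hαx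
        have h1 : lam * (s - x) ≤ Fs (x, s) := by
          rw [hlam]
          have h2 : Fs (α, s) / (s - α) * (s - x) ≤ Fs (x, s) / (s - x) * (s - x) :=
            mul_le_mul_of_nonneg_right hmon (by linarith)
          rwa [div_mul_cancel₀ _ (by linarith : s - x ≠ 0)] at h2
        linarith
      · -- s < y, g x < s : φ-case
        rw [indicator_of_mem (by simp only [mem_Ioo]; exact ⟨hgx, hy⟩),
          indicator_of_notMem (by simp only [mem_Ioo]; intro h; linarith [h.1])]
        rw [if_pos hy, if_neg (by linarith)]
        have hxs : x < s := lt_of_le_of_lt hxg hgx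
        have hxα : x ≤ α := by
          refine le_csInf hTne fun t ht => ?_
          simp only [hT, mem_setOf_eq] at ht
          by_contra hlt; push_neg at hlt
          have : g t ≤ g x := hmono hlt.le
          linarith
        have hmon := (hratio s hs).monotoneOn (mem_Iio.2 hxs) (mem_Iio.2 hcase) hxα
        have h1 : Fs (x, s) ≤ lam * (s - x) := by
          rw [hlam]
          have h2 : Fs (x, s) / (s - x) * (s - x) ≤ Fs (α, s) / (s - α) * (s - x) :=
            mul_le_mul_of_nonneg_right hmon (by linarith)
          rwa [div_mul_cancel₀ _ (by linarith : s - x ≠ 0)] at h2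
        linarith
      · -- s < y, s < g x : both 0 on indicators, ifs cancel
        rw [indicator_of_notMem (by simp only [mem_Ioo]; intro h; linarith [h.1]),
          indicator_of_notMem (by simp only [mem_Ioo]; intro h; linarith [h.2])]
        rw [if_pos hy, if_pos hgx]
        simp
    -- integrate the pointwise bound
    have he1int : Integrable (fun p : ℝ × ℝ => if s < p.2 then s - p.1 else 0) π := by
      have : (fun p : ℝ × ℝ => if s < p.2 then s - p.1 else 0) =
          ({p : ℝ × ℝ | s < p.2}).indicator (fun p => s - p.1) := by
        ext p; rw [indicator_apply]; rfl
      rw [this]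
      exact ((integrable_const s).sub hx).indicator (measurable_snd measurableSet_Ioi)
    have he2int : Integrable (fun p : ℝ × ℝ => if s < g p.1 then s - p.1 else 0) π := by
      have : (fun p : ℝ × ℝ => if s < g p.1 then s - p.1 else 0) =
          (Prod.fst ⁻¹' T).indicator (fun p => s - p.1) := by
        ext p; rw [indicator_apply]; rfl
      rw [this]
      exact ((integrable_const s).sub hx).indicator
        (measurable_fst (hgmeas measurableSet_Ioi))
    have hmain : (∫ p, ((Ioo (g p.1) p.2).indicator (fun t => Fs (p.1, t)) s -
          (Ioo p.2 (g p.1)).indicator (fun t => Fs (p.1, t)) s) ∂π) ≤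
        ∫ p, lam * ((if s < p.2 then s - p.1 else 0) - (if s < g p.1 then s - p.1 else 0)) ∂π := by
      refine integral_mono_ae (hφint.sub hψint) (((he1int.sub he2int).const_mul lam)) ?_
      filter_upwards [hMae, hyae, hgae] with p h1 h2 h3
      exact hpoint p h1 h2 h3
    rw [integral_sub hφint hψint] at hmain
    -- evaluate RHS
    have he1 : (∫ p : ℝ × ℝ, (if s < p.2 then s - p.1 else 0) ∂π) ≤ 0 := by
      have heq : (∫ p : ℝ × ℝ, (if s < p.2 then s - p.1 else 0) ∂π) =
          ∫ p in {p : ℝ × ℝ | s < p.2}, (s - p.1) ∂π := by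
        rw [← integral_indicator (show MeasurableSet {p : ℝ × ℝ | s < p.2} from
          measurable_snd measurableSet_Ioi)]
        first
        | rfl
        | (congr 1; ext p; rw [indicator_apply]; rfl)
      rw [heq, integral_sub (integrable_const s).integrableOn hx.integrableOn,
        setIntegral_const, smul_eq_mul, measureReal_def]
      have := key_pi hx hiv hs.le
      linarith
    have hTmeas : MeasurableSet T := hgmeas measurableSet_Ioi
    have he2 : (∫ p : ℝ × ℝ, (if s < g p.1 then s - p.1 else 0) ∂π) = 0 := by
      set h : ℝ → ℝ := T.indicator (fun x => s - x) with hh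
      have hmeas_h : Measurable h := (measurable_const.sub measurable_id).indicator hTmeas
      have hcomp : (fun p : ℝ × ℝ => if s < g p.1 then s - p.1 else 0) = fun p => h p.1 := by
        ext p
        rw [hh, indicator_apply]
        rfl
      rw [hcomp]
      have hmapint : (∫ p : ℝ × ℝ, h p.1 ∂π) = ∫ x, h x ∂μ := by
        rw [← hmap]
        exact (integral_map measurable_fst.aemeasurable hmeas_h.aestronglyMeasurable).symm
      rw [hmapint, hh, integral_indicator hTmeas]
      have hkm := key_mu hμI hc hs
      have : (∫ x in T, (s - x) ∂μ) = - ∫ x in {x | s < barycenter μ x}, (x - s) ∂μ := by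
        rw [← integral_neg]
        congr 1; ext x; ring
      rw [this, hkm, neg_zero]
    have hfinal : (∫ p, lam * ((if s < p.2 then s - p.1 else 0) -
        (if s < g p.1 then s - p.1 else 0)) ∂π) ≤ 0 := by
      rw [integral_const_mul, integral_sub he1int he2int, he2, sub_zero]
      exact mul_nonpos_of_nonneg_of_nonpos hlam_nonneg he1
    linarith

end PerS


set_option maxHeartbeats 1000000

/-- Azéma–Yor optimality under the Hobson–Klimmek derivative condition. -/
theorem azemaYor_optimal_HK (μ : Measure ℝ) [IsProbabilityMeasure μ] [NullSingletonClass μ]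
    (hμ : Centred μ)
    (F Fs : ℝ × ℝ → ℝ) (hFc : Continuous F)
    (hderiv : ∀ w s : ℝ, HasDerivAt (fun t : ℝ => F (w, t)) (Fs (w, s)) s)
    (hFs_cont : Continuous Fs)
    (hinc : ∀ w : ℝ, StrictMono (fun s : ℝ => F (w, s)))
    (hratio : ∀ s₀ : ℝ, 0 < s₀ →
      StrictMonoOn (fun w : ℝ => Fs (w, s₀) / (s₀ - w)) (Iio s₀))
    (hint : Integrable (fun w : ℝ => F (w, barycenter μ w)) μ)
    (π : Measure (ℝ × ℝ)) [IsProbabilityMeasure π]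
    (hπ : RogersAdmissible μ π) (hFπ : Integrable F π) :
    (∫ p, F p ∂π) ≤ ∫ w, F (w, barycenter μ w) ∂μ := by

  obtain ⟨hx, -, hM, hiv, hmap⟩ := hπ
  obtain ⟨hμI, hc⟩ := hμ
  set g := barycenter μ with hg
  have hgmeas : Measurable g := bary_measurable hμI
  have hFs_nonneg : ∀ p : ℝ × ℝ, 0 ≤ Fs p := by
    rintro ⟨w, s⟩
    exact deriv_nonneg_of_strictMono (hinc w) (hderiv w s)
  -- integrability of p ↦ F (p.1, g p.1)
  have hg0meas : Measurable (fun w : ℝ => F (w, g w)) :=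
    hFc.measurable.comp (measurable_id.prodMk hgmeas)
  have hFg_int : Integrable (fun p : ℝ × ℝ => F (p.1, g p.1)) π := by
    have h := hint
    rw [← hmap] at h
    exact (integrable_map_measure hg0meas.aestronglyMeasurable
      measurable_fst.aemeasurable).mp h
  have hIeq : (∫ w, F (w, g w) ∂μ) = ∫ p : ℝ × ℝ, F (p.1, g p.1) ∂π := by
    rw [← hmap]
    exact integral_map measurable_fst.aemeasurable hg0meas.aestronglyMeasurable
  -- reduce to ∫ D ≤ 0
  set D : ℝ × ℝ → ℝ := fun p => F p - F (p.1, g p.1) with hD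
  have hDint : Integrable D π := hFπ.sub hFg_int
  suffices hDle : (∫ p, D p ∂π) ≤ 0 by
    rw [integral_sub hFπ hFg_int] at hDle
    rw [hg] at hIeq
    linarith [hIeq]
  -- positive and negative parts via FTC
  set Rp : ℝ × ℝ → ℝ := fun p => ∫ t in Ioo (g p.1) p.2, Fs (p.1, t) with hRp
  set Rm : ℝ × ℝ → ℝ := fun p => ∫ t in Ioo p.2 (g p.1), Fs (p.1, t) with hRm
  have hFTC : ∀ p : ℝ × ℝ, D p = Rp p - Rm p := by
    rintro ⟨x, y⟩
    have hcont : Continuous (fun t : ℝ => Fs (x, t)) :=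
      hFs_cont.comp (continuous_const.prodMk continuous_id)
    have hftc : (∫ t in (g x)..y, Fs (x, t)) = F (x, y) - F (x, g x) :=
      intervalIntegral.integral_eq_sub_of_hasDerivAt (fun t _ => hderiv x t)
        (hcont.intervalIntegrable _ _)
    rcases le_or_gt (g x) y with hle | hlt
    · have h1 : (∫ t in (g x)..y, Fs (x, t)) = ∫ t in Ioo (g x) y, Fs (x, t) := by
        rw [intervalIntegral.integral_of_le hle, integral_Ioc_eq_integral_Ioo]
      have h2 : Ioo y (g x) = ∅ := Ioo_eq_empty (not_lt.2 hle)
      simp only [hD, hRp, hRm, h2]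
      rw [← h1, hftc]
      simp
    · have h1 : (∫ t in (g x)..y, Fs (x, t)) = - ∫ t in Ioo y (g x), Fs (x, t) := by
        rw [intervalIntegral.integral_symm, intervalIntegral.integral_of_le hlt.le,
          integral_Ioc_eq_integral_Ioo]
      have h2 : Ioo (g x) y = ∅ := Ioo_eq_empty (not_lt.2 hlt.le)
      simp only [hD, hRp, hRm, h2]
      rw [← hftc, h1]
      simp
  have hRp_nonneg : ∀ p, 0 ≤ Rp p := fun p =>
    setIntegral_nonneg measurableSet_Ioo (fun t _ => hFs_nonneg _)
  have hRm_nonneg : ∀ p, 0 ≤ Rm p := fun p =>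
    setIntegral_nonneg measurableSet_Ioo (fun t _ => hFs_nonneg _)
  have hmaxp : ∀ p, max (D p) 0 = Rp p := by
    intro p
    rcases le_or_gt (g p.1) p.2 with hle | hlt
    · have h2 : Ioo p.2 (g p.1) = ∅ := Ioo_eq_empty (not_lt.2 hle)
      have : Rm p = 0 := by rw [hRm]; simp [h2]
      rw [max_eq_left]
      · rw [hFTC p, this, sub_zero]
      · rw [hFTC p, this, sub_zero]; exact hRp_nonneg p
    · have h2 : Ioo (g p.1) p.2 = ∅ := Ioo_eq_empty (not_lt.2 hlt.le)
      have hz : Rp p = 0 := by rw [hRp]; simp [h2]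
      rw [max_eq_right, hz]
      rw [hFTC p, hz, zero_sub]
      exact neg_nonpos.2 (hRm_nonneg p)
  have hmaxm : ∀ p, max (-(D p)) 0 = Rm p := by
    intro p
    have := hmaxp p
    have hid : D p = Rp p - Rm p := hFTC p
    rcases le_or_gt 0 (D p) with hle | hlt
    · rw [max_eq_right (by linarith)]
      rw [max_eq_left hle] at this
      linarith
    · rw [max_eq_left (by linarith)]
      rw [max_eq_right hlt.le] at this
      linarith
  have hRpint : Integrable Rp π := by
    have := hDint.pos_part
    refine this.congr (Eventually.of_forall fun p => hmaxp p)
  have hRmint : Integrable Rm π := by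
    have := hDint.neg.pos_part
    refine this.congr (Eventually.of_forall fun p => hmaxm p)
  have hsplit : (∫ p, D p ∂π) = (∫ p, Rp p ∂π) - ∫ p, Rm p ∂π := by
    rw [← integral_sub hRpint hRmint]
    exact integral_congr_ae (Eventually.of_forall fun p => hFTC p)
  -- lintegral bridge
  classical
  set Φ : ℝ × ℝ → ℝ → ℝ≥0∞ := fun p s =>
    ENNReal.ofReal ((Ioo (g p.1) p.2).indicator (fun t => Fs (p.1, t)) s) with hΦ
  set Ψ : ℝ × ℝ → ℝ → ℝ≥0∞ := fun p s =>
    ENNReal.ofReal ((Ioo p.2 (g p.1)).indicator (fun t => Fs (p.1, t)) s) with hΨ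
  have hφmeas : Measurable (fun q : (ℝ × ℝ) × ℝ =>
      (Ioo (g q.1.1) q.1.2).indicator (fun t => Fs (q.1.1, t)) q.2) := by
    have hset : MeasurableSet {q : (ℝ × ℝ) × ℝ | g q.1.1 < q.2 ∧ q.2 < q.1.2} :=
      (measurableSet_lt (hgmeas.comp (measurable_fst.comp measurable_fst))
        measurable_snd).inter
        (measurableSet_lt measurable_snd (measurable_snd.comp measurable_fst))
    have heq : (fun q : (ℝ × ℝ) × ℝ =>
        (Ioo (g q.1.1) q.1.2).indicator (fun t => Fs (q.1.1, t)) q.2)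
        = ({q : (ℝ × ℝ) × ℝ | g q.1.1 < q.2 ∧ q.2 < q.1.2}).indicator
            (fun q => Fs (q.1.1, q.2)) := by
      ext q
      simp only [indicator_apply, mem_Ioo, mem_setOf_eq]
    rw [heq]
    exact (hFs_cont.measurable.comp
      ((measurable_fst.comp measurable_fst).prodMk measurable_snd)).indicator hset
  have hψmeas : Measurable (fun q : (ℝ × ℝ) × ℝ =>
      (Ioo q.1.2 (g q.1.1)).indicator (fun t => Fs (q.1.1, t)) q.2) := by
    have hset : MeasurableSet {q : (ℝ × ℝ) × ℝ | q.1.2 < q.2 ∧ q.2 < g q.1.1} :=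
      (measurableSet_lt (measurable_snd.comp measurable_fst) measurable_snd).inter
        (measurableSet_lt measurable_snd (hgmeas.comp (measurable_fst.comp measurable_fst)))
    have heq : (fun q : (ℝ × ℝ) × ℝ =>
        (Ioo q.1.2 (g q.1.1)).indicator (fun t => Fs (q.1.1, t)) q.2)
        = ({q : (ℝ × ℝ) × ℝ | q.1.2 < q.2 ∧ q.2 < g q.1.1}).indicator
            (fun q => Fs (q.1.1, q.2)) := by
      ext q
      simp only [indicator_apply, mem_Ioo, mem_setOf_eq]
    rw [heq]
    exact (hFs_cont.measurable.comp
      ((measurable_fst.comp measurable_fst).prodMk measurable_snd)).indicator hset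
  have hΦu : Measurable (Function.uncurry Φ) := by
    rw [hΦ]
    exact ENNReal.measurable_ofReal.comp hφmeas
  have hΨu : Measurable (Function.uncurry Ψ) := by
    rw [hΨ]
    exact ENNReal.measurable_ofReal.comp hψmeas
  -- evaluate inner s-integrals
  have hinner_p : ∀ p : ℝ × ℝ, (∫⁻ s, Φ p s) = ENNReal.ofReal (Rp p) := by
    intro p
    have hcont : Continuous (fun t : ℝ => Fs (p.1, t)) :=
      hFs_cont.comp (continuous_const.prodMk continuous_id)
    have hIoo : IntegrableOn (fun t => Fs (p.1, t)) (Ioo (g p.1) p.2) volume := by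
      rcases le_or_gt (g p.1) p.2 with hle | hlt
      · exact (intervalIntegrable_iff_integrableOn_Ioo_of_le hle).1
          (hcont.intervalIntegrable _ _)
      · rw [Ioo_eq_empty (not_lt.2 hlt.le)]
        exact integrableOn_empty
    have hindint : Integrable ((Ioo (g p.1) p.2).indicator fun t => Fs (p.1, t)) volume :=
      (integrable_indicator_iff measurableSet_Ioo).2 hIoo
    simp only [hΦ]
    rw [← ofReal_integral_eq_lintegral_ofReal hindint
      (Eventually.of_forall (fun t => indicator_nonneg (fun u _ => hFs_nonneg _) _)),
      integral_indicator measurableSet_Ioo]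
  have hinner_m : ∀ p : ℝ × ℝ, (∫⁻ s, Ψ p s) = ENNReal.ofReal (Rm p) := by
    intro p
    have hcont : Continuous (fun t : ℝ => Fs (p.1, t)) :=
      hFs_cont.comp (continuous_const.prodMk continuous_id)
    have hIoo : IntegrableOn (fun t => Fs (p.1, t)) (Ioo p.2 (g p.1)) volume := by
      rcases le_or_gt p.2 (g p.1) with hle | hlt
      · exact (intervalIntegrable_iff_integrableOn_Ioo_of_le hle).1
          (hcont.intervalIntegrable _ _)
      · rw [Ioo_eq_empty (not_lt.2 hlt.le)]
        exact integrableOn_empty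
    have hindint : Integrable ((Ioo p.2 (g p.1)).indicator fun t => Fs (p.1, t)) volume :=
      (integrable_indicator_iff measurableSet_Ioo).2 hIoo
    simp only [hΨ]
    rw [← ofReal_integral_eq_lintegral_ofReal hindint
      (Eventually.of_forall (fun t => indicator_nonneg (fun u _ => hFs_nonneg _) _)),
      integral_indicator measurableSet_Ioo]
  have htotP : (∫⁻ p, ∫⁻ s, Φ p s ∂volume ∂π) = ENNReal.ofReal (∫ p, Rp p ∂π) := by
    rw [lintegral_congr hinner_p]
    exact (ofReal_integral_eq_lintegral_ofReal hRpint
      (Eventually.of_forall hRp_nonneg)).symm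
  have htotM : (∫⁻ p, ∫⁻ s, Ψ p s ∂volume ∂π) = ENNReal.ofReal (∫ p, Rm p ∂π) := by
    rw [lintegral_congr hinner_m]
    exact (ofReal_integral_eq_lintegral_ofReal hRmint
      (Eventually.of_forall hRm_nonneg)).symm
  have hswapP : (∫⁻ p, ∫⁻ s, Φ p s ∂volume ∂π) = ∫⁻ s, ∫⁻ p, Φ p s ∂π ∂volume :=
    lintegral_lintegral_swap hΦu.aemeasurable
  have hswapM : (∫⁻ p, ∫⁻ s, Ψ p s ∂volume ∂π) = ∫⁻ s, ∫⁻ p, Ψ p s ∂π ∂volume :=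
    lintegral_lintegral_swap hΨu.aemeasurable
  -- a.e. s facts
  have hPmeas : Measurable (fun s : ℝ => ∫⁻ p, Φ p s ∂π) :=
    Measurable.lintegral_prod_left hΦu
  have hQmeas : Measurable (fun s : ℝ => ∫⁻ p, Ψ p s ∂π) :=
    Measurable.lintegral_prod_left hΨu
  have hPfin : ∀ᵐ s : ℝ, (∫⁻ p, Φ p s ∂π) < ⊤ := by
    refine ae_lt_top hPmeas ?_
    rw [← hswapP, htotP]
    exact ENNReal.ofReal_ne_top
  have hQfin : ∀ᵐ s : ℝ, (∫⁻ p, Ψ p s ∂π) < ⊤ := by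
    refine ae_lt_top hQmeas ?_
    rw [← hswapM, htotM]
    exact ENNReal.ofReal_ne_top
  have hN1 : ∀ᵐ s : ℝ, π {p : ℝ × ℝ | p.2 = s} = 0 := by
    have hcnt : Set.Countable {t : ℝ | 0 < π {p : ℝ × ℝ | p.2 = t}} :=
      Measure.countable_meas_level_set_pos measurable_snd
    have hnull : (volume : Measure ℝ) {t : ℝ | 0 < π {p : ℝ × ℝ | p.2 = t}} = 0 :=
      hcnt.measure_zero _
    filter_upwards [measure_eq_zero_iff_ae_notMem.1 hnull] with s hsn
    simpa using hsn
  have hN2 : ∀ᵐ s : ℝ, μ {x : ℝ | g x = s} = 0 := by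
    have hcnt : Set.Countable {t : ℝ | 0 < μ {x : ℝ | g x = t}} :=
      Measure.countable_meas_level_set_pos hgmeas
    have hnull : (volume : Measure ℝ) {t : ℝ | 0 < μ {x : ℝ | g x = t}} = 0 :=
      hcnt.measure_zero _
    filter_upwards [measure_eq_zero_iff_ae_notMem.1 hnull] with s hsn
    simpa using hsn
  -- the per-s comparison
  have hcomp : ∀ᵐ s : ℝ, (∫⁻ p, Φ p s ∂π) ≤ ∫⁻ p, Ψ p s ∂π := by
    filter_upwards [hPfin, hQfin, hN1, hN2] with s hPf hQf hs1 hs2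
    rcases le_or_gt s 0 with hsle | hspos
    · have hz : ∀ p : ℝ × ℝ, Φ p s = 0 := by
        intro p
        simp only [hΦ]
        rw [indicator_of_notMem, ENNReal.ofReal_zero]
        intro hmem
        have := bary_nonneg hμI hc p.1
        rw [← hg] at this
        linarith [hmem.1]
      rw [lintegral_congr hz, lintegral_zero]
      exact zero_le
    · -- real conversion + per_s
      have hφs_meas : Measurable
          (fun p : ℝ × ℝ => (Ioo (g p.1) p.2).indicator (fun t => Fs (p.1, t)) s) := by
        have hset : MeasurableSet {p : ℝ × ℝ | g p.1 < s ∧ s < p.2} :=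
          (measurableSet_lt (hgmeas.comp measurable_fst) measurable_const).inter
            (measurableSet_lt measurable_const measurable_snd)
        have heq : (fun p : ℝ × ℝ => (Ioo (g p.1) p.2).indicator (fun t => Fs (p.1, t)) s)
            = ({p : ℝ × ℝ | g p.1 < s ∧ s < p.2}).indicator (fun p => Fs (p.1, s)) := by
          ext p
          simp only [indicator_apply, mem_Ioo, mem_setOf_eq]
        rw [heq]
        exact (hFs_cont.measurable.comp
          (measurable_fst.prodMk measurable_const)).indicator hset
      have hψs_meas : Measurable
          (fun p : ℝ × ℝ => (Ioo p.2 (g p.1)).indicator (fun t => Fs (p.1, t)) s) := by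
        have hset : MeasurableSet {p : ℝ × ℝ | p.2 < s ∧ s < g p.1} :=
          (measurableSet_lt measurable_snd measurable_const).inter
            (measurableSet_lt measurable_const (hgmeas.comp measurable_fst))
        have heq : (fun p : ℝ × ℝ => (Ioo p.2 (g p.1)).indicator (fun t => Fs (p.1, t)) s)
            = ({p : ℝ × ℝ | p.2 < s ∧ s < g p.1}).indicator (fun p => Fs (p.1, s)) := by
          ext p
          simp only [indicator_apply, mem_Ioo, mem_setOf_eq]
        rw [heq]
        exact (hFs_cont.measurable.comp
          (measurable_fst.prodMk measurable_const)).indicator hset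
      have hφnn : ∀ p : ℝ × ℝ,
          0 ≤ (Ioo (g p.1) p.2).indicator (fun t => Fs (p.1, t)) s :=
        fun p => indicator_nonneg (fun u _ => hFs_nonneg _) _
      have hψnn : ∀ p : ℝ × ℝ,
          0 ≤ (Ioo p.2 (g p.1)).indicator (fun t => Fs (p.1, t)) s :=
        fun p => indicator_nonneg (fun u _ => hFs_nonneg _) _
      have hφint : Integrable
          (fun p : ℝ × ℝ => (Ioo (g p.1) p.2).indicator (fun t => Fs (p.1, t)) s) π :=
        ⟨hφs_meas.aestronglyMeasurable,
          (hasFiniteIntegral_iff_ofReal (Eventually.of_forall hφnn)).2 hPf⟩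
      have hψint : Integrable
          (fun p : ℝ × ℝ => (Ioo p.2 (g p.1)).indicator (fun t => Fs (p.1, t)) s) π :=
        ⟨hψs_meas.aestronglyMeasurable,
          (hasFiniteIntegral_iff_ofReal (Eventually.of_forall hψnn)).2 hQf⟩
      have hmain := per_s hμI hc Fs hFs_cont hFs_nonneg hratio hx hiv hM hmap hspos
        hs1 hs2 hφint hψint
      calc (∫⁻ p, Φ p s ∂π)
          = ENNReal.ofReal (∫ p, (Ioo (g p.1) p.2).indicator (fun t => Fs (p.1, t)) s ∂π) :=
            (ofReal_integral_eq_lintegral_ofReal hφint (Eventually.of_forall hφnn)).symm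
        _ ≤ ENNReal.ofReal (∫ p, (Ioo p.2 (g p.1)).indicator (fun t => Fs (p.1, t)) s ∂π) :=
            ENNReal.ofReal_le_ofReal hmain
        _ = ∫⁻ p, Ψ p s ∂π :=
            ofReal_integral_eq_lintegral_ofReal hψint (Eventually.of_forall hψnn)
  have hfin : ENNReal.ofReal (∫ p, Rp p ∂π) ≤ ENNReal.ofReal (∫ p, Rm p ∂π) := by
    rw [← htotP, ← htotM, hswapP, hswapM]
    exact lintegral_mono_ae hcomp
  have hreal : (∫ p, Rp p ∂π) ≤ ∫ p, Rm p ∂π := by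
    have hRmpos : 0 ≤ ∫ p, Rm p ∂π := integral_nonneg hRm_nonneg
    exact le_trans (ENNReal.toReal_ofReal (integral_nonneg hRp_nonneg) ▸
      (ENNReal.toReal_mono ENNReal.ofReal_ne_top hfin).trans_eq
      (ENNReal.toReal_ofReal hRmpos)) le_rfl
  rw [hsplit]
  linarith
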